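/- For natural numbers $m\le n$ and integers $c,d$ with $d\ge 1$ and $d\ge c$, the numbers $R_{n,k}=\binom{n}{k}\binom{n+ck}{m+dk}(n-k)!$ satisfy $R_{n,k}=\frac{n!}{k!}[t^n]\,\frac{t^m}{(1-t)^{m+1}}\Big(\frac{t^{d-c}}{(1-t)^d}\Big)^k$, i.e., the triangle $\big[\binom{n}{k}\binom{n+ck}{m+dk}(n-k)!\big]$ is the coefficient array of the exponential Riordan-type pair $\big(\frac{t^m}{(1-t)^{m+1}},\ \frac{t^{d-c}}{(1-t)^d}\big)$. -/

import Mathlib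

open PowerSeries

private lemma one_sub_X_inv : (1 - X : ℚ⟦X⟧)⁻¹ = mk 1 := by
  rw [PowerSeries.inv_eq_iff_mul_eq_one (by simp)]
  exact mk_one_mul_one_sub_eq_one ℚ

/-- For `d ≥ 1`, `d ≥ c` and `m ≤ n`, the triangle entries
`R_{n,k} = C(n,k)·C(n+ck, m+dk)·(n-k)!` satisfy
`R_{n,k} = (n!/k!)·[t^n] (t^m/(1-t)^{m+1})·(t^{d-c}/(1-t)^d)^k`,
i.e. the triangle is the coefficient array of the Riordan-type pair
`(t^m/(1-t)^{m+1}, t^{d-c}/(1-t)^d)`. (Binomials with a negative upper entry vanish,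
encoded via `Int.toNat`.) -/
theorem binomial_riordan_first (m n k : ℕ) (c d : ℤ)
    (hmn : m ≤ n) (hd : 1 ≤ d) (hcd : c ≤ d) (hk : k ≤ n) :
    ((n.choose k : ℚ) * (Nat.choose ((n : ℤ) + c * k).toNat ((m : ℤ) + d * k).toNat : ℚ) *
        ((n - k).factorial : ℚ)) =
      ((n.factorial : ℚ) / (k.factorial : ℚ)) *
        PowerSeries.coeff (R := ℚ) n
          (PowerSeries.X ^ m * ((1 - PowerSeries.X)⁻¹) ^ (m + 1) *
            (PowerSeries.X ^ (d - c).toNat * ((1 - PowerSeries.X)⁻¹) ^ d.toNat) ^ k) := by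
  set e := (d - c).toNat with he
  set dt := d.toNat with hdt
  -- rewrite the series
  have hser : (PowerSeries.X ^ m * ((1 - PowerSeries.X)⁻¹) ^ (m + 1) *
      (PowerSeries.X ^ e * ((1 - PowerSeries.X)⁻¹) ^ dt) ^ k : ℚ⟦X⟧)
      = X ^ (m + e * k) * (mk fun j => (Nat.choose (m + dt * k + j) (m + dt * k) : ℚ)) := by
    rw [one_sub_X_inv, ← mk_one_pow_eq_mk_choose_add]
    rw [mul_pow, ← pow_mul, ← pow_mul]
    ring
  rw [hser, coeff_X_pow_mul']
  -- LHS simplification: C(n,k)*(n-k)! = n!/k!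
  have hfac : (n.choose k : ℚ) * ((n - k).factorial : ℚ)
      = (n.factorial : ℚ) / (k.factorial : ℚ) := by
    have h1 : (n.choose k * (n - k).factorial * k.factorial : ℕ) = n.factorial := by
      rw [mul_right_comm]; exact Nat.choose_mul_factorial_mul_factorial hk
    rw [eq_div_iff (by exact_mod_cast k.factorial_ne_zero)]
    exact_mod_cast h1
  have hdd : dt = d := Int.toNat_of_nonneg (by omega)
  have hee : (e : ℤ) = d - c := Int.toNat_of_nonneg (by omega)
  split_ifs with h
  · -- m + e*k ≤ n
    rw [coeff_mk]
    have key : ((n : ℤ) + c * k).toNat = m + dt * k + (n - (m + e * k)) := by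
      have : ((n:ℤ) + c * k) = (m + dt * k) + ((n:ℤ) - (m + e*k)) := by
        push_cast [hdd, hee]; ring
      omega
    have key2 : ((m : ℤ) + d * k).toNat = m + dt * k := by
      have : ((m:ℤ) + d * k) = ((m + dt * k : ℕ) : ℤ) := by push_cast [hdd]; ring
      omega
    rw [key, key2, ← hfac]; ring
  · -- m + e*k > n : LHS binomial is zero
    have hz : Nat.choose ((n : ℤ) + c * k).toNat ((m : ℤ) + d * k).toNat = 0 := by
      apply Nat.choose_eq_zero_of_lt
      have hk1 : 1 ≤ k := by
        rcases Nat.eq_zero_or_pos k with hk0 | hk0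
        · exfalso; apply h; simpa [hk0] using hmn
        · exact hk0
      have hdk : d * 1 ≤ d * (k : ℤ) := by
        apply mul_le_mul_of_nonneg_left _ (by omega)
        exact_mod_cast hk1
      have hlt : (n:ℤ) + c * k < (m:ℤ) + d * k := by
        have hn : (n:ℤ) < m + e * k := by exact_mod_cast Nat.lt_of_not_le h
        have hek : (e:ℤ) * k = (d - c) * k := by rw [hee]
        nlinarith [hn, hek]
      omega
    rw [hz]
    simp
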